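/- If w is a factor of x, then the numbers of occurrences of the letters 1 and 2 in w differ by at most 1, i.e., ||w|₁ − |w|₂| ≤ 1. Consequently, the letters 1 and 2 alternate in the word obtained from x by erasing all occurrences of 0. -/
import Mathlib


/-- The 2-kernel of a sequence `s : ℕ → ℤ`. -/
def kernel2 (s : ℕ → ℤ) : Set (ℕ → ℤ) :=
  {t | ∃ i j : ℕ, j < 2 ^ i ∧ t = fun n => s (2 ^ i * n + j)}

/-- A sequence is 2-regular if the ℤ-module spanned by its 2-kernel is finitely generated. -/
def IsTwoRegular (s : ℕ → ℤ) : Prop :=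
  (Submodule.span ℤ (kernel2 s)).FG

/-- A sequence is 2-automatic if its 2-kernel is finite. -/
def IsTwoAutomatic (s : ℕ → ℤ) : Prop :=
  (kernel2 s).Finite

/-- The period-doubling word, fixed point (starting with 0) of 0 ↦ 01, 1 ↦ 00:
its `n`-th letter is the parity of the 2-adic valuation of `n+1`. -/
def pd (n : ℕ) : ℕ := (n + 1).factorization 2 % 2

/-- The Thue–Morse word, fixed point (starting with 0) of 0 ↦ 01, 1 ↦ 10:
its `n`-th letter is the parity of the binary digit sum of `n`. -/
def tm (n : ℕ) : ℕ := (Nat.digits 2 n).sum % 2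

/-- The 2-block coding `x = block(p, 2)` of the period-doubling word. -/
def xw (n : ℕ) : ℕ := 2 * pd n + pd (n + 1)

/-- The 2-block coding `y = block(t, 2)` of the Thue–Morse word. -/
def yw (n : ℕ) : ℕ := 2 * tm n + tm (n + 1)

/-- The factor of an infinite word `w` of length `len` occurring at position `i`. -/
def factorAt (w : ℕ → ℕ) (i len : ℕ) : List ℕ :=
  (List.range len).map fun k => w (i + k)

/-- `u` is a factor of the infinite word `w`. -/
def IsFactor (w : ℕ → ℕ) (u : List ℕ) : Prop :=
  ∃ i, u = factorAt w i u.length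

/-- Maximal number of 0's in a factor of `x` of length `n`. -/
noncomputable def M0 (n : ℕ) : ℕ := sSup {k | ∃ i, (factorAt xw i n).count 0 = k}

/-- Minimal number of 0's in a factor of `x` of length `n`. -/
noncomputable def m0 (n : ℕ) : ℕ := sInf {k | ∃ i, (factorAt xw i n).count 0 = k}

noncomputable def D0 (n : ℕ) : ℕ := M0 n - m0 n

/-- Maximal number of 2's in a factor of `x` of length `n`. -/
noncomputable def M2c (n : ℕ) : ℕ := sSup {k | ∃ i, (factorAt xw i n).count 2 = k}

/-- Minimal number of 2's in a factor of `x` of length `n`. -/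
noncomputable def m2c (n : ℕ) : ℕ := sInf {k | ∃ i, (factorAt xw i n).count 2 = k}

/-- The max-jump function for `M0`. -/
noncomputable def JM0 : ℕ → ℕ
  | 0 => 0
  | n + 1 => if M0 n < M0 (n + 1) then 1 else 0

/-- The min-jump function for `m0`. -/
noncomputable def jm0 (n : ℕ) : ℕ := if m0 n < m0 (n + 1) then 1 else 0

/-- Maximal total number of 1's and 2's in a factor of `y` of length `n`. -/
noncomputable def M12 (n : ℕ) : ℕ :=
  sSup {k | ∃ i, (factorAt yw i n).count 1 + (factorAt yw i n).count 2 = k}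

/-- Minimal total number of 1's and 2's in a factor of `y` of length `n`. -/
noncomputable def m12 (n : ℕ) : ℕ :=
  sInf {k | ∃ i, (factorAt yw i n).count 1 + (factorAt yw i n).count 2 = k}

noncomputable def D12 (n : ℕ) : ℕ := M12 n - m12 n

/-- Maximal total number of 0's and 3's in a factor of `y` of length `n`. -/
noncomputable def M03 (n : ℕ) : ℕ :=
  sSup {k | ∃ i, (factorAt yw i n).count 0 + (factorAt yw i n).count 3 = k}

/-- Minimal total number of 0's and 3's in a factor of `y` of length `n`. -/
noncomputable def m03 (n : ℕ) : ℕ :=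
  sInf {k | ∃ i, (factorAt yw i n).count 0 + (factorAt yw i n).count 3 = k}

/-- The max-jump function for `M03`. -/
noncomputable def JM03 (n : ℕ) : ℕ := if M03 (n - 1) < M03 n then 1 else 0

/-- The min-jump function for `m03`. -/
noncomputable def jm03 (n : ℕ) : ℕ := if m03 n < m03 (n + 1) then 1 else 0

/-- Abelian complexity: the number of abelian equivalence classes (i.e. distinct
multisets of letters) of factors of `w` of length `n`. -/
noncomputable def abComplexity (w : ℕ → ℕ) (n : ℕ) : ℕ :=
  Set.ncard {m : Multiset ℕ | ∃ i, (↑(factorAt w i n) : Multiset ℕ) = m}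

/-- The number of occurrences of `v` as a factor of `u`. -/
def countFactor (u v : List ℕ) : ℕ :=
  ((List.range (u.length + 1 - v.length)).filter
    fun i => decide ((u.drop i).take v.length = v)).length

/-- 2-abelian complexity: the number of 2-abelian equivalence classes of factors of `w`
of length `n`, where two words are 2-abelian equivalent when every word of length at most 2
occurs equally often in both. -/
noncomputable def abel2Complexity (w : ℕ → ℕ) (n : ℕ) : ℕ :=
  Set.ncard {f : List ℕ → ℕ |
    ∃ i, f = fun v => if v.length ≤ 2 then countFactor (factorAt w i n) v else 0}

/-- The morphism φ : 0 ↦ 12, 1 ↦ 12, 2 ↦ 00. -/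
def phiL : ℕ → List ℕ
  | 0 => [1, 2]
  | 1 => [1, 2]
  | 2 => [0, 0]
  | _ => []

/-- The morphism τ : 0 ↦ 0, 1 ↦ 2, 2 ↦ 1. -/
def tauL : ℕ → ℕ
  | 1 => 2
  | 2 => 1
  | n => n

lemma pd_even (k : ℕ) : pd (2 * k) = 0 := by
  unfold pd
  have h : ¬ (2 ∣ (2 * k + 1)) := by omega
  rw [Nat.factorization_eq_zero_of_not_dvd h]

lemma pd_odd (k : ℕ) : pd (2 * k + 1) = (1 + pd k) % 2 := by
  unfold pd
  have h : (2 * k + 1 + 1) = 2 * (k + 1) := by ring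
  rw [h, Nat.factorization_mul (by norm_num) (by omega)]
  have h2 : Nat.factorization 2 2 = 1 := by
    simp [Nat.Prime.factorization Nat.prime_two]
  simp only [Finsupp.add_apply, h2]
  omega

lemma xw_even_le (k : ℕ) : xw (2 * k) ≤ 1 := by
  unfold xw
  rw [pd_even, pd_odd]
  omega

lemma xw_odd (k : ℕ) : xw (2 * k + 1) = 2 * xw (2 * k) := by
  unfold xw
  have h : 2 * k + 1 + 1 = 2 * (k + 1) := by ring
  rw [h, pd_even, pd_even]
  omega

lemma factorAt_succ (w : ℕ → ℕ) (i n : ℕ) :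
    factorAt w i (n + 1) = factorAt w i n ++ [w (i + n)] := by
  simp [factorAt, List.range_succ]

/-- prefix count -/
def cnt (a N : ℕ) : ℤ := ((factorAt xw 0 N).count a : ℤ)

lemma count_factor (a i : ℕ) : ∀ n, ((factorAt xw i n).count a : ℤ) = cnt a (i + n) - cnt a i := by
  intro n
  induction n with
  | zero => simp [cnt, factorAt]
  | succ n ih =>
    have h : i + (n + 1) = (i + n) + 1 := by ring
    rw [factorAt_succ, h]
    unfold cnt at *
    rw [factorAt_succ]
    simp only [List.count_append]
    push_cast
    have h0 : (0 : ℕ) + (i + n) = i + n := by ring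
    rw [h0]
    omega

/-- difference of counts of 1 and 2 in the prefix of length N -/
def F (N : ℕ) : ℤ := cnt 1 N - cnt 2 N

lemma F_succ (N : ℕ) : F (N + 1) =
    F N + (if xw N = 1 then 1 else 0) - (if xw N = 2 then 1 else 0) := by
  unfold F cnt
  rw [factorAt_succ]
  simp only [List.count_append, List.count_singleton', Nat.zero_add]
  push_cast
  by_cases h1 : xw N = 1
  · simp only [h1, if_pos rfl]
    norm_num
    ring
  · by_cases h2 : xw N = 2
    · simp only [h2]
      norm_num [h1]
      ring
    · simp [h1, h2, Ne.symm h1, Ne.symm h2]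

lemma F_key : ∀ k, F (2 * k) = 0 ∧ F (2 * k + 1) = (xw (2 * k) : ℤ) := by
  intro k
  induction k with
  | zero =>
    constructor
    · simp [F, cnt, factorAt]
    · rw [show 2 * 0 + 1 = 0 + 1 by ring, F_succ]
      have h0 : F 0 = 0 := by simp [F, cnt, factorAt]
      have : xw (2 * 0) ≤ 1 := xw_even_le 0
      simp only [Nat.mul_zero] at *
      interval_cases h : xw 0 <;> simp_all
  | succ k ih =>
    obtain ⟨ih1, ih2⟩ := ih
    have hodd := xw_odd k
    have hle := xw_even_le k
    have e1 : 2 * (k + 1) = (2 * k + 1) + 1 := by ring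
    have h2 : F (2 * (k + 1)) = 0 := by
      rw [e1, F_succ, ih2]
      interval_cases h : xw (2 * k) <;> simp_all
    refine ⟨h2, ?_⟩
    rw [F_succ, h2]
    have hle' := xw_even_le (k + 1)
    interval_cases h : xw (2 * (k + 1)) <;> simp_all

lemma F_bounds (N : ℕ) : 0 ≤ F N ∧ F N ≤ 1 := by
  rcases Nat.even_or_odd N with ⟨k, hk⟩ | ⟨k, hk⟩
  · have := (F_key k).1
    rw [hk, show k + k = 2 * k by ring, this]
    omega
  · have h := (F_key k).2
    have hle := xw_even_le k
    rw [hk, h]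
    omega

lemma xw_even_ne_two (k : ℕ) : xw (2 * k) ≠ 2 := by
  have := xw_even_le k; omega

lemma xw_odd_ne_one (k : ℕ) : xw (2 * k + 1) ≠ 1 := by
  rw [xw_odd]; omega

theorem stmt7 :
    (∀ w : List ℕ, IsFactor xw w → ((w.count 1 : ℤ) - (w.count 2 : ℤ)).natAbs ≤ 1) ∧
    (∀ i j : ℕ, i < j → xw i ≠ 0 → xw j ≠ 0 →
      (∀ k, i < k → k < j → xw k = 0) → xw i ≠ xw j) := by
  constructor
  · rintro w ⟨i, hw⟩
    have h1 := count_factor 1 i w.length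
    have h2 := count_factor 2 i w.length
    have hF1 := F_bounds (i + w.length)
    have hF2 := F_bounds i
    unfold F at hF1 hF2
    rw [← hw] at h1 h2
    omega
  · intro i j hij hi hj hz heq
    rcases Nat.even_or_odd i with ⟨a, ha⟩ | ⟨a, ha⟩ <;>
      rcases Nat.even_or_odd j with ⟨b, hb⟩ | ⟨b, hb⟩
    · -- both even: both letters are 1, but then xw (2a+1) = 2 ≠ 0 lies strictly between
      have ha' : i = 2 * a := by omega
      have hb' : j = 2 * b := by omega
      have hxa : xw (2 * a) = 1 := by have := xw_even_le a; rw [ha'] at hi; omega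
      have hmid : xw (2 * a + 1) = 2 := by rw [xw_odd, hxa]
      have : xw (2 * a + 1) = 0 := hz _ (by omega) (by omega)
      omega
    · -- i even, j odd: xw i = 1, xw j ∈ {0,2}
      have ha' : i = 2 * a := by omega
      have hb' : j = 2 * b + 1 := by omega
      have hxa : xw (2 * a) = 1 := by have := xw_even_le a; rw [ha'] at hi; omega
      have := xw_odd_ne_one b
      rw [ha', hb'] at heq
      omega
    · -- i odd, j even
      have ha' : i = 2 * a + 1 := by omega
      have hb' : j = 2 * b := by omega
      have := xw_odd_ne_one a
      have hxb : xw (2 * b) = 1 := by have := xw_even_le b; rw [hb'] at hj; omega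
      rw [ha', hb'] at heq
      omega
    · -- both odd: both letters are 2, but xw (2b) = 1 ≠ 0 lies strictly between
      have ha' : i = 2 * a + 1 := by omega
      have hb' : j = 2 * b + 1 := by omega
      have hxb : xw (2 * b) = 1 := by
        have h := xw_odd b
        have := xw_even_le b
        rw [hb'] at hj
        omega
      have : xw (2 * b) = 0 := hz _ (by omega) (by omega)
      omega
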